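/- Sturm-type oscillation: let ω₀ > 0, let [a, b] ⊆ ℝ be an interval with b − a ≥ π/ω₀, let ω : [a, b] → ℝ be continuous with ω(σ) ≥ ω₀ for all σ ∈ [a, b], and let z : [a, b] → ℝ be a twice-differentiable solution of z''(σ) = −ω(σ)² z(σ). Then z has a zero in [a, b]. -/

import Mathlib

open Set

lemma sturm_aux
    (a b ω₀ : ℝ) (hω₀ : 0 < ω₀) (hab : Real.pi / ω₀ ≤ b - a)
    (ω : ℝ → ℝ)
    (hω : ∀ σ ∈ Icc a b, ω₀ ≤ ω σ)
    (z z' : ℝ → ℝ)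
    (hz : ∀ σ ∈ Icc a b, HasDerivWithinAt z (z' σ) (Icc a b) σ)
    (hz' : ∀ σ ∈ Icc a b, HasDerivWithinAt z' (-(ω σ) ^ 2 * z σ) (Icc a b) σ)
    (hpos : ∀ σ ∈ Icc a b, 0 < z σ) : False := by
  set c : ℝ := a + Real.pi / ω₀ with hc
  have hπ : 0 < Real.pi / ω₀ := div_pos Real.pi_pos hω₀
  have hac : a < c := by simp [hc, hπ]
  have hcb : c ≤ b := by rw [hc]; linarith
  have hicc : Icc a c ⊆ Icc a b := Icc_subset_Icc le_rfl hcb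
  set W : ℝ → ℝ := fun σ => z' σ * Real.sin (ω₀ * (σ - a))
      - z σ * (ω₀ * Real.cos (ω₀ * (σ - a))) with hWdef
  have hlin : ∀ σ : ℝ, HasDerivAt (fun t => ω₀ * (t - a)) ω₀ σ := by
    intro σ
    simpa using (((hasDerivAt_id σ).sub_const a).const_mul ω₀)
  have hs : ∀ σ : ℝ, HasDerivAt (fun t => Real.sin (ω₀ * (t - a)))
      (Real.cos (ω₀ * (σ - a)) * ω₀) σ := fun σ =>
    (Real.hasDerivAt_sin _).comp σ (hlin σ)
  have hcos : ∀ σ : ℝ, HasDerivAt (fun t => ω₀ * Real.cos (ω₀ * (t - a)))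
      (ω₀ * (-Real.sin (ω₀ * (σ - a)) * ω₀)) σ := fun σ =>
    ((Real.hasDerivAt_cos _).comp σ (hlin σ)).const_mul ω₀
  have hW : ∀ σ ∈ Icc a b, HasDerivWithinAt W
      (z σ * Real.sin (ω₀ * (σ - a)) * (ω₀ ^ 2 - (ω σ) ^ 2)) (Icc a b) σ := by
    intro σ hσ
    have h1 := ((hz' σ hσ).mul (hs σ).hasDerivWithinAt).sub
      ((hz σ hσ).mul (hcos σ).hasDerivWithinAt)
    convert h1 using 1
    case e'_9 => ring
    all_goals rfl
  -- antitone on [a,c]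
  have hWcont : ContinuousOn W (Icc a c) :=
    fun σ hσ => ((hW σ (hicc hσ)).continuousWithinAt).mono hicc
  have hWanti : AntitoneOn W (Icc a c) := by
    have hint : interior (Icc a c) = Ioo a c := interior_Icc
    apply antitoneOn_of_deriv_nonpos (convex_Icc a c) hWcont
    · intro x hx
      rw [hint] at hx
      have hxb : x ∈ Icc a b := ⟨hx.1.le, hx.2.le.trans hcb⟩
      exact ((hW x hxb).hasDerivAt (Icc_mem_nhds (hx.1) (lt_of_lt_of_le hx.2 hcb))).differentiableAt.differentiableWithinAt
    · intro x hx
      rw [hint] at hx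
      have hxb : x ∈ Icc a b := ⟨hx.1.le, hx.2.le.trans hcb⟩
      have hd := (hW x hxb).hasDerivAt (Icc_mem_nhds (hx.1) (lt_of_lt_of_le hx.2 hcb))
      rw [hd.deriv]
      have hsin : 0 ≤ Real.sin (ω₀ * (x - a)) := by
        apply Real.sin_nonneg_of_nonneg_of_le_pi
        · have := hx.1; nlinarith
        · have : x - a ≤ Real.pi / ω₀ := by
            have := hx.2
            simp [hc] at this
            linarith
          calc ω₀ * (x - a) ≤ ω₀ * (Real.pi / ω₀) := by
                exact mul_le_mul_of_nonneg_left this hω₀.le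
            _ = Real.pi := by field_simp
      have hω2 : ω₀ ^ 2 ≤ (ω x) ^ 2 := by
        have h1 := hω x hxb
        nlinarith
      have hzx := hpos x hxb
      exact mul_nonpos_of_nonneg_of_nonpos (mul_nonneg hzx.le hsin) (by linarith)
  have hWa : W a = -(z a * ω₀) := by simp [hWdef]
  have hWc : W c = z c * ω₀ := by
    have : ω₀ * (c - a) = Real.pi := by
      rw [hc, add_sub_cancel_left]; field_simp
    simp [hWdef, this]
  have hza := hpos a ⟨le_rfl, by linarith⟩
  have hzc := hpos c ⟨hac.le, hcb⟩
  have := hWanti (left_mem_Icc.2 hac.le) (right_mem_Icc.2 hac.le) hac.le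
  rw [hWa, hWc] at this
  nlinarith

theorem sturm_oscillation
    (a b ω₀ : ℝ) (hω₀ : 0 < ω₀) (hab : Real.pi / ω₀ ≤ b - a)
    (ω : ℝ → ℝ) (hωcont : ContinuousOn ω (Icc a b))
    (hω : ∀ σ ∈ Icc a b, ω₀ ≤ ω σ)
    (z z' : ℝ → ℝ)
    (hz : ∀ σ ∈ Icc a b, HasDerivWithinAt z (z' σ) (Icc a b) σ)
    (hz' : ∀ σ ∈ Icc a b, HasDerivWithinAt z' (-(ω σ) ^ 2 * z σ) (Icc a b) σ) :
    ∃ σ ∈ Icc a b, z σ = 0 := by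
  by_contra h
  push_neg at h
  have hπ : 0 < Real.pi / ω₀ := div_pos Real.pi_pos hω₀
  have hab' : a ≤ b := by linarith
  have hzcont : ContinuousOn z (Icc a b) :=
    fun σ hσ => (hz σ hσ).continuousWithinAt
  -- the sign of z is constant on [a,b]
  have hsign : (∀ σ ∈ Icc a b, 0 < z σ) ∨ (∀ σ ∈ Icc a b, z σ < 0) := by
    by_contra hs
    push_neg at hs
    obtain ⟨⟨x, hx, hx0⟩, ⟨y, hy, hy0⟩⟩ := hs
    have hxneg : z x < 0 := lt_of_le_of_ne hx0 (h x hx)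
    have hypos : 0 < z y := lt_of_le_of_ne hy0 (Ne.symm (h y hy))
    have huIcc : uIcc x y ⊆ Icc a b := uIcc_subset_Icc hx hy
    have := intermediate_value_uIcc (hzcont.mono huIcc)
    have h0 : (0:ℝ) ∈ uIcc (z x) (z y) := by
      rw [mem_uIcc]; left; exact ⟨hxneg.le, hypos.le⟩
    obtain ⟨σ, hσ, hσ0⟩ := this h0
    exact h σ (huIcc hσ) hσ0
  rcases hsign with hpos | hneg
  · exact (sturm_aux a b ω₀ hω₀ hab ω hω z z' hz hz' hpos).elim
  · refine (sturm_aux a b ω₀ hω₀ hab ω hω (fun σ => -z σ) (fun σ => -z' σ)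
      (fun σ hσ => (hz σ hσ).neg) (fun σ hσ => ?_)
      (fun σ hσ => neg_pos.2 (hneg σ hσ))).elim
    have := (hz' σ hσ).neg
    convert this using 1
    case e'_9 => ring
    all_goals rfl
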